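/- Let X be a Banach space and let κ be an uncountable cardinal. Let (x_α)_{α<κ} be a family in X equivalent to the standard unit vector basis of c₀(κ), or equivalent to the standard unit vector basis of ℓ_p(κ) for some p ∈ (1, ∞). Let Y be a Banach space that has an M-basis (b_j, f_j)_{j∈J}, and let T ∈ B(X, Y) be non-zero. Then there exists Λ ⊆ κ with |Λ| = κ such that the vectors (T x_α)_{α∈Λ} are pairwise disjointly supported, i.e. supp(T x_α) ∩ supp(T x_β) = ∅ for all distinct α, β ∈ Λ. -/

import Mathlib

noncomputable section

open scoped ENNReal NNReal

/-- The space `ℓ_p(ι)` of `p`-summable real families indexed by `ι`, as a type.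
For `p = ∞` this is the space of bounded families with the supremum norm. -/
abbrev ellp (ι : Type*) (p : ℝ≥0∞) : Type _ := lp (fun _ : ι => ℝ) p

/-- The standard unit vector `e_α` of `ℓ_p(ι)`. -/
def stdVec (ι : Type*) (p : ℝ≥0∞) (α : ι) : ellp ι p :=
  letI := Classical.decEq ι
  lp.single p α 1

/-- `c₀(ι)`, realised as the submodule of `ℓ∞(ι)` consisting of those families `f` such
that `{i | ε ≤ |f i|}` is finite for every `ε > 0`; it carries the supremum norm. -/
def c0Submodule (ι : Type*) : Submodule ℝ (ellp ι ∞) where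
  carrier := {f | ∀ ε : ℝ, 0 < ε → {i : ι | ε ≤ |f i|}.Finite}
  zero_mem' := by
    intro ε hε
    have h : {i : ι | ε ≤ |(0 : ellp ι ∞) i|} = ∅ := by
      ext i
      simp [lp.coeFn_zero, hε.not_ge]
    rw [h]
    exact Set.finite_empty
  add_mem' := by
    intro f g hf hg ε hε
    have h2 : 0 < ε / 2 := by linarith
    refine ((hf _ h2).union (hg _ h2)).subset ?_
    intro i hi
    simp only [Set.mem_setOf_eq, lp.coeFn_add, Pi.add_apply] at hi
    by_contra hcon
    simp only [Set.mem_union, Set.mem_setOf_eq, not_or, not_le] at hcon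
    have habs : |f i + g i| ≤ |f i| + |g i| := abs_add_le _ _
    linarith [hcon.1, hcon.2]
  smul_mem' := by
    intro c f hf ε hε
    rcases eq_or_ne c 0 with rfl | hc
    · have h : {i : ι | ε ≤ |((0 : ℝ) • f) i|} = ∅ := by
        ext i
        simp [zero_smul, hε.not_ge]
      rw [h]
      exact Set.finite_empty
    · have hcpos : 0 < |c| := abs_pos.2 hc
      refine (hf (ε / |c|) (by positivity)).subset ?_
      intro i hi
      simp only [Set.mem_setOf_eq, lp.coeFn_smul, Pi.smul_apply, smul_eq_mul, abs_mul] at hi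
      simp only [Set.mem_setOf_eq]
      rw [div_le_iff₀ hcpos]
      linarith [hi, mul_comm (|c|) (|f i|)]

/-- The Banach space `c₀(ι)` with the supremum norm. -/
abbrev c0Space (ι : Type*) : Type _ := ↥(c0Submodule ι)

/-- `ℓ∞^c(ι)`: the submodule of `ℓ∞(ι)` of countably supported bounded families,
with the supremum norm. -/
def lInftyCSubmodule (ι : Type*) : Submodule ℝ (ellp ι ∞) where
  carrier := {f | {i : ι | f i ≠ 0}.Countable}
  zero_mem' := by
    have h : {i : ι | (0 : ellp ι ∞) i ≠ 0} = ∅ := by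
      ext i
      simp [lp.coeFn_zero]
    rw [Set.mem_setOf_eq, h]
    exact Set.countable_empty
  add_mem' := by
    intro f g hf hg
    refine (hf.union hg).mono ?_
    intro i hi
    simp only [Set.mem_setOf_eq, lp.coeFn_add, Pi.add_apply] at hi
    by_contra hcon
    simp only [Set.mem_union, Set.mem_setOf_eq, not_or, not_not] at hcon
    rw [hcon.1, hcon.2, add_zero] at hi
    exact hi rfl
  smul_mem' := by
    intro c f hf
    refine hf.mono ?_
    intro i hi
    simp only [Set.mem_setOf_eq, lp.coeFn_smul, Pi.smul_apply, smul_eq_mul] at hi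
    simp only [Set.mem_setOf_eq]
    intro h
    rw [h, mul_zero] at hi
    exact hi rfl

/-- The Banach space `ℓ∞^c(ι)` with the supremum norm. -/
abbrev lInftyCSpace (ι : Type*) : Type _ := ↥(lInftyCSubmodule ι)

lemma stdVec_mem_c0 (ι : Type*) (α : ι) : stdVec ι ∞ α ∈ c0Submodule ι := by
  letI := Classical.decEq ι
  intro ε hε
  refine (Set.finite_singleton α).subset ?_
  intro i hi
  simp only [Set.mem_setOf_eq] at hi
  simp only [Set.mem_singleton_iff]
  by_contra h
  rw [stdVec] at hi
  rw [lp.single_apply_ne _ _ _ h] at hi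
  simp at hi
  linarith

lemma stdVec_mem_lInftyC (ι : Type*) (α : ι) : stdVec ι ∞ α ∈ lInftyCSubmodule ι := by
  letI := Classical.decEq ι
  refine (Set.countable_singleton α).mono ?_
  intro i hi
  simp only [Set.mem_setOf_eq] at hi
  simp only [Set.mem_singleton_iff]
  by_contra h
  rw [stdVec, lp.single_apply_ne _ _ _ h] at hi
  exact hi rfl

/-- The standard unit vector `e_α` of `c₀(ι)`. -/
def c0Vec (ι : Type*) (α : ι) : c0Space ι := ⟨stdVec ι ∞ α, stdVec_mem_c0 ι α⟩

/-- The standard unit vector `e_α` of `ℓ∞^c(ι)`. -/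
def lInftyCVec (ι : Type*) (α : ι) : lInftyCSpace ι := ⟨stdVec ι ∞ α, stdVec_mem_lInftyC ι α⟩

/-- `T` preserves an isomorphic copy of `Z`: there is a closed subspace `W` of `X`,
isomorphic to `Z`, on which `T` is bounded below. -/
def PreservesCopy {X : Type*} [NormedAddCommGroup X] [NormedSpace ℝ X]
    (Z : Type*) [NormedAddCommGroup Z] [NormedSpace ℝ Z] (T : X →L[ℝ] X) : Prop :=
  ∃ W : Submodule ℝ X, IsClosed (W : Set X) ∧ Nonempty (W ≃L[ℝ] Z) ∧
    ∃ γ : ℝ, 0 < γ ∧ ∀ w ∈ W, γ * ‖w‖ ≤ ‖T w‖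

/-- The set `𝒮_Z(X)` of `Z`-singular operators on `X`. -/
def SZ (Z : Type*) [NormedAddCommGroup Z] [NormedSpace ℝ Z]
    (X : Type*) [NormedAddCommGroup X] [NormedSpace ℝ X] : Set (X →L[ℝ] X) :=
  {T | ¬ PreservesCopy Z T}

/-- A sequence of operators SOT-converges to `T₀` if it converges pointwise in norm. -/
def SOTConvergesTo {X : Type*} [NormedAddCommGroup X] [NormedSpace ℝ X]
    (T : ℕ → X →L[ℝ] X) (T₀ : X →L[ℝ] X) : Prop :=
  ∀ x : X, Filter.Tendsto (fun n => T n x) Filter.atTop (nhds (T₀ x))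

/-- An M-basis `(b_j, f_j)_{j ∈ J}` for a Banach space `X`: a biorthogonal system which is
fundamental (the span of the `b_j` is dense) and total (the span of the `f_j` is
weak*-dense in the dual). -/
structure IsMBasis {X : Type*} [NormedAddCommGroup X] [NormedSpace ℝ X] {J : Type*}
    (b : J → X) (f : J → X →L[ℝ] ℝ) : Prop where
  biorth_self : ∀ j, f j (b j) = 1
  biorth_ne : ∀ i j, i ≠ j → f j (b i) = 0
  fundamental : Dense (Submodule.span ℝ (Set.range b) : Set X)
  total : Dense ((Submodule.span ℝ (Set.range fun j => (f j : WeakDual ℝ X)) :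
    Submodule ℝ (WeakDual ℝ X)) : Set (WeakDual ℝ X))

/-- A family `(x_α)` in `X` is equivalent to the standard unit vector basis of `ℓ_q(ι)`
(with `q` a real exponent). -/
def IsLpBasisEquiv {X ι : Type*} [NormedAddCommGroup X] [NormedSpace ℝ X]
    (x : ι → X) (q : ℝ) : Prop :=
  ∃ c C : ℝ, 0 < c ∧ 0 < C ∧ ∀ a : ι →₀ ℝ,
    c * (∑ α ∈ a.support, |a α| ^ q) ^ (1 / q) ≤ ‖a.sum fun α r => r • x α‖ ∧
      ‖a.sum fun α r => r • x α‖ ≤ C * (∑ α ∈ a.support, |a α| ^ q) ^ (1 / q)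

/-- A family `(x_α)` in `X` is equivalent to the standard unit vector basis of `c₀(ι)`. -/
def IsC0BasisEquiv {X ι : Type*} [NormedAddCommGroup X] [NormedSpace ℝ X]
    (x : ι → X) : Prop :=
  ∃ c C : ℝ, 0 < c ∧ 0 < C ∧ ∀ a : ι →₀ ℝ,
    c * ((a.support.sup fun α => ‖a α‖₊) : ℝ≥0) ≤ ‖a.sum fun α r => r • x α‖ ∧
      ‖a.sum fun α r => r • x α‖ ≤ C * ((a.support.sup fun α => ‖a α‖₊) : ℝ≥0)

universe u v w x

section Aux

lemma aux_finite_support_of_mem_span {Y : Type*} [NormedAddCommGroup Y] [NormedSpace ℝ Y]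
    {J : Type*} {b : J → Y} {f : J → Y →L[ℝ] ℝ}
    (hne : ∀ i j, i ≠ j → f j (b i) = 0)
    {u : Y} (hu : u ∈ Submodule.span ℝ (Set.range b)) :
    {j | f j u ≠ 0}.Finite := by
  induction hu using Submodule.span_induction with
  | mem y hy =>
    obtain ⟨i, rfl⟩ := hy
    refine (Set.finite_singleton i).subset ?_
    intro j hj
    simp only [Set.mem_setOf_eq] at hj
    simp only [Set.mem_singleton_iff]
    by_contra h
    exact hj (hne i j (fun h' => h h'.symm))
  | zero => simp
  | add u v _ _ hu hv =>
    refine (hu.union hv).subset ?_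
    intro j hj
    simp only [Set.mem_setOf_eq, map_add] at hj
    by_contra hc
    simp only [Set.mem_union, Set.mem_setOf_eq, not_or, not_not] at hc
    rw [hc.1, hc.2, add_zero] at hj
    exact hj rfl
  | smul c u _ hu =>
    refine hu.subset ?_
    intro j hj
    simp only [Set.mem_setOf_eq, map_smul, smul_eq_mul] at hj ⊢
    intro h
    rw [h, mul_zero] at hj
    exact hj rfl

lemma aux_countable_support {Y : Type*} [NormedAddCommGroup Y] [NormedSpace ℝ Y]
    {J : Type*} {b : J → Y} {f : J → Y →L[ℝ] ℝ}
    (hne : ∀ i j, i ≠ j → f j (b i) = 0)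
    (hfund : Dense (Submodule.span ℝ (Set.range b) : Set Y))
    (y : Y) : {j | f j y ≠ 0}.Countable := by
  have hy : y ∈ closure (Submodule.span ℝ (Set.range b) : Set Y) := hfund y
  rw [mem_closure_iff_seq_limit] at hy
  obtain ⟨u, hu, hlim⟩ := hy
  have hsub : {j | f j y ≠ 0} ⊆ ⋃ n, {j | f j (u n) ≠ 0} := by
    intro j hj
    simp only [Set.mem_setOf_eq] at hj
    by_contra hc
    simp only [Set.mem_iUnion, Set.mem_setOf_eq, not_exists, not_not] at hc
    have : Filter.Tendsto (fun n => f j (u n)) Filter.atTop (nhds (f j y)) :=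
      ((f j).continuous.tendsto y).comp hlim
    simp only [hc] at this
    exact hj (tendsto_nhds_unique this tendsto_const_nhds)
  exact (Set.countable_iUnion fun n =>
    (aux_finite_support_of_mem_span hne (hu n)).countable).mono hsub


lemma aux_big_combo {X : Type*} [NormedAddCommGroup X] [NormedSpace ℝ X]
    {ι : Type*} (x : ι → X) (g : X →L[ℝ] ℝ) {ε : ℝ} (hε : 0 < ε)
    {s : Set ι} (hs : ∀ α ∈ s, ε ≤ |g (x α)|) (hinf : s.Infinite) (m : ℕ) :
    ∃ a : ι →₀ ℝ, a.support.card = m ∧ (∀ α ∈ a.support, |a α| = 1) ∧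
      (m : ℝ) * ε ≤ ‖g‖ * ‖a.sum fun α r => r • x α‖ := by
  classical
  obtain ⟨F, hFsub, hFcard⟩ := hinf.exists_subset_card_eq m
  set φ : ι → ℝ := fun α => if α ∈ F then (if 0 < g (x α) then 1 else -1) else 0 with hφ
  have hφne : ∀ α ∈ F, φ α ≠ 0 := by
    intro α hα
    simp only [hφ, if_pos hα]
    split <;> norm_num
  have hφabs : ∀ α ∈ F, |φ α| = 1 := by
    intro α hα
    simp only [hφ, if_pos hα]
    split <;> norm_num
  set a : ι →₀ ℝ := Finsupp.onFinset F φ (by intro α h; by_contra hα; simp [hφ, hα] at h)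
    with ha
  have hsupp : a.support = F := by
    ext α
    simp only [ha, Finsupp.mem_support_iff, Finsupp.onFinset_apply]
    constructor
    · intro h; by_contra hα; simp [hφ, hα] at h
    · exact hφne α
  have happ : ∀ α, a α = φ α := fun α => rfl
  refine ⟨a, by rw [hsupp, hFcard], by rw [hsupp]; intro α hα; rw [happ]; exact hφabs α hα, ?_⟩
  have hsum : (a.sum fun α r => r • x α) = ∑ α ∈ F, φ α • x α := by
    refine Finsupp.sum_of_support_subset a (le_of_eq hsupp) _ ?_
    intro i _; exact zero_smul ℝ (x i)
  have hg : g (a.sum fun α r => r • x α) = ∑ α ∈ F, φ α * g (x α) := by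
    rw [hsum, map_sum]
    refine Finset.sum_congr rfl fun α _ => ?_
    rw [map_smul]; rfl
  have hterm : ∀ α ∈ F, ε ≤ φ α * g (x α) := by
    intro α hα
    have h1 := hs α (hFsub hα)
    simp only [hφ, if_pos hα]
    by_cases h : 0 < g (x α)
    · rw [if_pos h, one_mul]; rwa [abs_of_pos h] at h1
    · rw [if_neg h, neg_one_mul]; rwa [abs_of_nonpos (le_of_not_gt h)] at h1
  have hlow : (m : ℝ) * ε ≤ g (a.sum fun α r => r • x α) := by
    rw [hg, ← hFcard]
    calc (F.card : ℝ) * ε = ∑ _α ∈ F, ε := by rw [Finset.sum_const, nsmul_eq_mul]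
    _ ≤ ∑ α ∈ F, φ α * g (x α) := Finset.sum_le_sum hterm
  calc (m : ℝ) * ε ≤ g (a.sum fun α r => r • x α) := hlow
  _ ≤ |g (a.sum fun α r => r • x α)| := le_abs_self _
  _ ≤ ‖g‖ * ‖a.sum fun α r => r • x α‖ := by
      rw [← Real.norm_eq_abs]; exact g.le_opNorm _

lemma aux_countable_ne_zero {X : Type*} [NormedAddCommGroup X] [NormedSpace ℝ X]
    {ι : Type*} {x : ι → X}
    (hx : IsC0BasisEquiv x ∨ ∃ q : ℝ, 1 < q ∧ IsLpBasisEquiv x q)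
    (g : X →L[ℝ] ℝ) : {α | g (x α) ≠ 0}.Countable := by
  have hfin : ∀ n : ℕ, {α | 1/((n:ℝ)+1) ≤ |g (x α)|}.Finite := by
    intro n
    by_contra hinf
    replace hinf : Set.Infinite {α | 1/((n:ℝ)+1) ≤ |g (x α)|} := hinf
    set N : ℝ := (n:ℝ) + 1 with hNdef
    have hN : (0:ℝ) < N := by positivity
    have hε : (0:ℝ) < 1/N := by positivity
    have hmem : ∀ α ∈ {α | 1/N ≤ |g (x α)|}, 1/N ≤ |g (x α)| := fun α hα => hα
    rcases hx with ⟨c, C, hc, hC, hb⟩ | ⟨q, hq, c, C, hc, hC, hb⟩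
    · -- c₀ case
      obtain ⟨m, hm⟩ := exists_nat_gt (N * (‖g‖ * C))
      obtain ⟨a, hcard, habs, hlow⟩ := aux_big_combo x g hε hmem hinf m
      have hsup : ((a.support.sup fun α => ‖a α‖₊ : ℝ≥0) : ℝ) ≤ 1 := by
        rw [show (1:ℝ) = ((1 : ℝ≥0) : ℝ) by norm_num, NNReal.coe_le_coe]
        refine Finset.sup_le fun α hα => ?_
        rw [← NNReal.coe_le_coe, coe_nnnorm, Real.norm_eq_abs, habs α hα, NNReal.coe_one]
      have hub : ‖a.sum fun α r => r • x α‖ ≤ C := by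
        refine (hb a).2.trans ?_
        nlinarith [hsup]
      have h1 : (m : ℝ) * (1/N) ≤ ‖g‖ * C :=
        hlow.trans (by nlinarith [norm_nonneg g])
      rw [mul_one_div, div_le_iff₀ hN] at h1
      nlinarith [h1, hm]
    · -- ℓ_q case
      have hq0 : (0:ℝ) < 1/q := by positivity
      set r : ℝ := 1 - 1/q with hrdef
      have h1q : 1/q < 1 := by rw [div_lt_one (by linarith)]; linarith
      have hr : 0 < r := by rw [hrdef]; linarith
      set t : ℝ := N * (‖g‖ * C) with htdef
      have ht : 0 ≤ t := by positivity
      obtain ⟨m, hm⟩ := exists_nat_gt (max 1 ((t+1) ^ r⁻¹))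
      have hm1 : (1:ℝ) < m := lt_of_le_of_lt (le_max_left _ _) hm
      have hm0 : (0:ℝ) < m := by linarith
      obtain ⟨a, hcard, habs, hlow⟩ := aux_big_combo x g hε hmem hinf m
      have hsum1 : (∑ α ∈ a.support, |a α| ^ q) = (m : ℝ) := by
        rw [← hcard]
        rw [Finset.sum_congr rfl fun α hα => by rw [habs α hα, Real.one_rpow]]
        simp
      have hub : ‖a.sum fun α r => r • x α‖ ≤ C * (m:ℝ) ^ (1/q) := by
        refine (hb a).2.trans ?_
        rw [hsum1]
      have h1 : (m : ℝ) * (1/N) ≤ ‖g‖ * (C * (m:ℝ) ^ (1/q)) :=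
        hlow.trans (by nlinarith [norm_nonneg g])
      rw [mul_one_div, div_le_iff₀ hN] at h1
      have h2 : (m : ℝ) ≤ t * (m:ℝ) ^ (1/q) := by
        rw [htdef]; nlinarith [h1]
      have hsplit : (m:ℝ) = (m:ℝ) ^ (1/q) * (m:ℝ) ^ r := by
        rw [← Real.rpow_add hm0, show 1/q + r = 1 by rw [hrdef]; ring, Real.rpow_one]
      have h3 : (m:ℝ) ^ r ≤ t := by
        have hpow : (0:ℝ) < (m:ℝ) ^ (1/q) := Real.rpow_pos_of_pos hm0 _
        have h2' : (m:ℝ) ^ r * (m:ℝ) ^ (1/q) ≤ t * (m:ℝ) ^ (1/q) := by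
          rw [mul_comm ((m:ℝ) ^ r) _, ← hsplit]; exact h2
        exact le_of_mul_le_mul_right h2' hpow
      have h4 : t + 1 < (m:ℝ) ^ r := by
        have hlt : (t+1) ^ r⁻¹ < (m:ℝ) := lt_of_le_of_lt (le_max_right _ _) hm
        calc t + 1 = ((t+1) ^ r⁻¹) ^ r := by
              rw [← Real.rpow_mul (by linarith : (0:ℝ) ≤ t+1), inv_mul_cancel₀ hr.ne', Real.rpow_one]
        _ < (m:ℝ) ^ r := Real.rpow_lt_rpow (Real.rpow_nonneg (by linarith) _) hlt hr
      linarith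
  have hsub : {α | g (x α) ≠ 0} ⊆ ⋃ n : ℕ, {α | 1/((n:ℝ)+1) ≤ |g (x α)|} := by
    intro α hα
    simp only [Set.mem_setOf_eq] at hα
    obtain ⟨n, hn⟩ := exists_nat_one_div_lt (abs_pos.2 hα)
    exact Set.mem_iUnion.2 ⟨n, le_of_lt hn⟩
  exact (Set.countable_iUnion fun n => (hfin n).countable).mono hsub

end Aux

/-- Images of a long `c₀`- or `ℓ_p`-basic family under a non-zero operator
into a space with an M-basis admit a full-cardinality disjointly supported subfamily. -/
theorem exists_disjointly_supported_image {X : Type u} [NormedAddCommGroup X]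
    [NormedSpace ℝ X] [CompleteSpace X] {ικ : Type v}
    (hκ : Cardinal.aleph0 < Cardinal.mk ικ)
    (x : ικ → X)
    (hx : IsC0BasisEquiv x ∨ ∃ q : ℝ, 1 < q ∧ IsLpBasisEquiv x q)
    {Y : Type w} [NormedAddCommGroup Y] [NormedSpace ℝ Y] [CompleteSpace Y]
    {J : Type x} (b : J → Y) (f : J → Y →L[ℝ] ℝ) (hbf : IsMBasis b f)
    (T : X →L[ℝ] Y) (hT : T ≠ 0) :
    ∃ Λ : Set ικ, Cardinal.mk Λ = Cardinal.mk ικ ∧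
      ∀ α ∈ Λ, ∀ β ∈ Λ, α ≠ β →
        Disjoint {j : J | f j (T (x α)) ≠ 0} {j : J | f j (T (x β)) ≠ 0} := by
  classical
  have hScount : ∀ α, {j : J | f j (T (x α)) ≠ 0}.Countable := fun α =>
    aux_countable_support hbf.biorth_ne hbf.fundamental (T (x α))
  set S : ικ → Set J := fun α => {j : J | f j (T (x α)) ≠ 0} with hS
  have hBcount : ∀ j : J, {α : ικ | f j (T (x α)) ≠ 0}.Countable := fun j =>
    aux_countable_ne_zero hx ((f j).comp T)
  set B : J → Set ικ := fun j => {α : ικ | f j (T (x α)) ≠ 0} with hB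
  set G : ικ → Set ικ := fun α => insert α (⋃ j ∈ S α, B j) with hG
  have hGcount : ∀ α, (G α).Countable := fun α =>
    ((hScount α).biUnion fun j _ => hBcount j).insert α
  set P : Set (Set ικ) := {Λ | ∀ α ∈ Λ, ∀ β ∈ Λ, α ≠ β → Disjoint (S α) (S β)} with hP
  obtain ⟨Λ, hΛ⟩ := zorn_subset P (by
    intro c hc hchain
    refine ⟨⋃₀ c, ?_, fun s hs => Set.subset_sUnion_of_mem hs⟩
    intro α hα β hβ hne
    obtain ⟨s, hsc, hαs⟩ := hα
    obtain ⟨t, htc, hβt⟩ := hβ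
    rcases hchain.total hsc htc with h | h
    · exact hc htc α (h hαs) β hβt hne
    · exact hc hsc α hαs β (h hβt) hne)
  refine ⟨Λ, ?_, fun α hα β hβ hne => hΛ.prop α hα β hβ hne⟩
  refine le_antisymm (Cardinal.mk_set_le Λ) ?_
  by_contra hlt
  rw [not_le] at hlt
  have hF : Cardinal.mk (⋃ α ∈ Λ, G α : Set ικ) < Cardinal.mk ικ := by
    refine lt_of_le_of_lt (Cardinal.mk_biUnion_le G Λ) ?_
    refine Cardinal.mul_lt_of_lt hκ.le hlt ?_
    refine lt_of_le_of_lt (ciSup_le' fun α => ?_) hκ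
    haveI := (hGcount (α : ικ)).to_subtype
    exact Cardinal.mk_le_aleph0
  have hne : (⋃ α ∈ Λ, G α : Set ικ) ≠ Set.univ := by
    intro h
    rw [h, Cardinal.mk_univ] at hF
    exact lt_irrefl _ hF
  obtain ⟨β, hβ⟩ := (Set.ne_univ_iff_exists_notMem _).mp hne
  have hβΛ : β ∉ Λ := fun h => hβ (Set.mem_biUnion h (Set.mem_insert β _))
  have hins : insert β Λ ∈ P := by
    intro α hα α' hα' hne
    rcases hα with rfl | hα
    · rcases hα' with rfl | hα'
      · exact absurd rfl hne
      · rw [Set.disjoint_left]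
        intro j hjβ hjα'
        exact hβ (Set.mem_biUnion hα' (Set.mem_insert_of_mem _ (Set.mem_biUnion hjα' hjβ)))
    · rcases hα' with rfl | hα'
      · rw [Set.disjoint_right]
        intro j hjβ hjα
        exact hβ (Set.mem_biUnion hα (Set.mem_insert_of_mem _ (Set.mem_biUnion hjα hjβ)))
      · exact hΛ.prop α hα α' hα' hne
  exact hβΛ (hΛ.2 hins (Set.subset_insert β Λ) (Set.mem_insert β Λ))
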